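/- Every partition p ∈ P(k,l) with t(p) through-blocks admits a unique through-block decomposition p = q*rs where s ∈ P_bp(k, t(p)) and q ∈ P_bp(l, t(p)) are building partitions and r ∈ P_2(t(p), t(p)) is a through-partition; moreover no loops are removed in composing r with s nor q* with rs, b(p) = b(q) + b(s) − t(p), and β(p) = β(q) + β(s) where β denotes the number of non-through-blocks. -/

import Mathlib

/-- A two-row partition with `k` upper and `l` lower points, encoded as the
equivalence relation whose classes are the blocks. -/
abbrev PP (k l : ℕ) := Setoid (Fin k ⊕ Fin l)

/-- The involution `p*` (turning `p` upside down). -/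
def swapP {k l : ℕ} (p : PP k l) : PP l k := Setoid.comap Sum.swap p

/-- Disjoint union of two setoids. -/
def sumSetoid {α β : Type*} (s : Setoid α) (t : Setoid β) : Setoid (α ⊕ β) where
  r := Sum.LiftRel s.r t.r
  iseqv := by
    refine ⟨fun x => ?_, fun {x y} h => ?_, fun {x y z} h1 h2 => ?_⟩
    · cases x with
      | inl a => exact Sum.LiftRel.inl (s.iseqv.refl a)
      | inr b => exact Sum.LiftRel.inr (t.iseqv.refl b)
    · cases h with
      | inl h => exact Sum.LiftRel.inl (s.iseqv.symm h)
      | inr h => exact Sum.LiftRel.inr (t.iseqv.symm h)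
    · cases h1 with
      | inl h1 =>
        cases h2 with
        | inl h2 => exact Sum.LiftRel.inl (s.iseqv.trans h1 h2)
      | inr h1 =>
        cases h2 with
        | inr h2 => exact Sum.LiftRel.inr (t.iseqv.trans h1 h2)

/-- Reindexing equivalence for the horizontal concatenation (tensor product). -/
def tensorEquiv (k l k' l' : ℕ) :
    (Fin (k + k') ⊕ Fin (l + l')) ≃ ((Fin k ⊕ Fin l) ⊕ (Fin k' ⊕ Fin l')) :=
  (Equiv.sumCongr finSumFinEquiv.symm finSumFinEquiv.symm).trans
    (Equiv.sumSumSumComm (Fin k) (Fin k') (Fin l) (Fin l'))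

/-- Tensor product (horizontal concatenation) of partitions. -/
def tensorP {k l k' l' : ℕ} (p : PP k l) (q : PP k' l') : PP (k + k') (l + l') :=
  Setoid.comap (tensorEquiv k l k' l') (sumSetoid p q)

/-- The relation on `k ⊔ l ⊔ m` points generated by `p` (upper part) and `q` (lower part). -/
def midRel {k l m : ℕ} (p : PP k l) (q : PP l m) :
    (Fin k ⊕ (Fin l ⊕ Fin m)) → (Fin k ⊕ (Fin l ⊕ Fin m)) → Prop := fun x y =>
  (∃ a b : Fin k ⊕ Fin l, p.r a b ∧ x = Sum.map id Sum.inl a ∧ y = Sum.map id Sum.inl b) ∨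
  (∃ a b : Fin l ⊕ Fin m, q.r a b ∧ x = Sum.inr a ∧ y = Sum.inr b)

/-- The equivalence relation generated on `k ⊔ l ⊔ m` in the composition procedure. -/
def bigS {k l m : ℕ} (p : PP k l) (q : PP l m) : Setoid (Fin k ⊕ (Fin l ⊕ Fin m)) :=
  Relation.EqvGen.setoid (midRel p q)

/-- `compP q p` is the vertical composition `qp` (apply `p : P(k,l)` first, then `q : P(l,m)`). -/
def compP {k l m : ℕ} (q : PP l m) (p : PP k l) : PP k m :=
  Setoid.comap (Sum.map id Sum.inr) (bigS p q)

/-- `rlP q p` : the number of closed loops removed in the composition `qp`,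
i.e. the blocks of the generated relation consisting only of middle points. -/
noncomputable def rlP {k l m : ℕ} (q : PP l m) (p : PP k l) : ℕ :=
  Nat.card {c : Quotient (bigS p q) //
    ∀ x, Quotient.mk (bigS p q) x = c → ∃ b : Fin l, x = Sum.inr (Sum.inl b)}

/-- `b(p)` : number of blocks. -/
noncomputable def bP {k l : ℕ} (p : PP k l) : ℕ := Nat.card (Quotient p)

/-- `t(p)` : number of through-blocks (blocks meeting both rows). -/
noncomputable def tP {k l : ℕ} (p : PP k l) : ℕ :=
  Nat.card {c : Quotient p // (∃ a : Fin k, Quotient.mk p (Sum.inl a) = c) ∧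
    (∃ b : Fin l, Quotient.mk p (Sum.inr b) = c)}

/-- `β(p) = b(p) - t(p)` : number of non-through-blocks. -/
noncomputable def betaP {k l : ℕ} (p : PP k l) : ℕ := bP p - tP p

/-- The identity partition `|^{⊗k}`. -/
def idP (k : ℕ) : PP k k := Setoid.ker (Sum.elim (fun i : Fin k => i) (fun i : Fin k => i))

/-- A pair partition: all blocks have size two. -/
def isPair {k l : ℕ} (p : PP k l) : Prop := ∀ x, Nat.card {y // p.r x y} = 2

/-- A through-partition: a pair partition each of whose blocks connects exactly one
upper point to exactly one lower point. -/
def isThrough {k : ℕ} (p : PP k k) : Prop :=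
  isPair p ∧ (∀ a b : Fin k, p.r (Sum.inl a) (Sum.inl b) → a = b) ∧
    (∀ a b : Fin k, p.r (Sum.inr a) (Sum.inr b) → a = b)

/-- A building partition. -/
def isBuilding {k l : ℕ} (p : PP k l) : Prop :=
  (∀ b b' : Fin l, p.r (Sum.inr b) (Sum.inr b') → b = b') ∧
  (∀ b : Fin l, ∃ a : Fin k, p.r (Sum.inl a) (Sum.inr b)) ∧
  (∀ b b' : Fin l, ∀ a a' : Fin k, b < b' →
    IsLeast {x : Fin k | p.r (Sum.inl x) (Sum.inr b)} a →
    IsLeast {x : Fin k | p.r (Sum.inl x) (Sum.inr b')} a' → a < a')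

/-- A projective partition: symmetric and idempotent. -/
def isProjective {k : ℕ} (p : PP k k) : Prop := swapP p = p ∧ compP p p = p

/-- Linear position of the points, reading the upper row left to right and then the
lower row right to left. -/
def posP (k l : ℕ) : Fin k ⊕ Fin l → ℕ :=
  Sum.elim (fun i => (i : ℕ)) (fun j => k + (l - 1 - (j : ℕ)))

/-- Noncrossing partitions. -/
def isNC {k l : ℕ} (p : PP k l) : Prop :=
  ¬ ∃ x1 x2 x3 x4 : Fin k ⊕ Fin l,
    posP k l x1 < posP k l x2 ∧ posP k l x2 < posP k l x3 ∧ posP k l x3 < posP k l x4 ∧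
    p.r x1 x3 ∧ p.r x2 x4 ∧ ¬ p.r x1 x2

section prelim

lemma mk_eq_iff {α} (s : Setoid α) (x y : α) :
    Quotient.mk s x = Quotient.mk s y ↔ s.r x y := ⟨Quotient.exact, Quotient.sound⟩

lemma comap_ker {α β γ} (f : α → β) (g : β → γ) :
    Setoid.comap f (Setoid.ker g) = Setoid.ker (g ∘ f) := Setoid.ext fun _ _ => Iff.rfl

lemma setoid_as_ker {α} (s : Setoid α) : s = Setoid.ker (Quotient.mk s) :=
  Setoid.ext fun _ _ => ⟨Quotient.sound, Quotient.exact⟩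

lemma ker_comp_inj {α β γ} (g : α → β) (d : β → γ) (hd : Function.Injective d) :
    Setoid.ker g = Setoid.ker (d ∘ g) :=
  Setoid.ext fun x y => ⟨fun h => congrArg d h, fun h => hd h⟩

noncomputable def leastOf {n : ℕ} (S : Set (Fin n)) (h : S.Nonempty) : Fin n :=
  (Set.toFinite S).toFinset.min' (by simpa [Set.Finite.toFinset] using h)

lemma leastOf_isLeast {n : ℕ} (S : Set (Fin n)) (h : S.Nonempty) : IsLeast S (leastOf S h) := by
  constructor
  · have := (Set.toFinite S).toFinset.min'_mem (by simpa using h)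
    exact (Set.Finite.mem_toFinset _).1 this
  · intro x hx
    exact Finset.min'_le _ x ((Set.Finite.mem_toFinset _).2 hx)

/-- Enumerate a finite type in increasing order of an injective `Fin N`-valued function. -/
lemma exists_strictMono_enum {α : Type*} {n N : ℕ} (f : α → Fin N) (hf : Function.Injective f)
    (hcard : Nat.card α = n) :
    ∃ e : Fin n → α, Function.Bijective e ∧ StrictMono (f ∘ e) := by
  have : Finite α := Finite.of_injective f hf
  have hfin : (Set.range f).Finite := Set.toFinite _
  have hS : hfin.toFinset.card = n := by
    rw [← Set.ncard_eq_toFinset_card _ hfin, ← Nat.card_coe_set_eq,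
      Nat.card_range_of_injective hf, hcard]
  set e0 := hfin.toFinset.orderIsoOfFin hS with he0
  have hmem : ∀ i : Fin n, ∃ a : α, f a = (e0 i : Fin N) := by
    intro i
    have := (e0 i).2
    rw [Set.Finite.mem_toFinset] at this
    exact this
  refine ⟨fun i => (hmem i).choose, ⟨?_, ?_⟩, ?_⟩
  · intro i j hij
    have h2 := congrArg f hij
    rw [(hmem i).choose_spec, (hmem j).choose_spec] at h2
    exact e0.injective (Subtype.val_injective h2)
  · intro a
    have hfa : f a ∈ hfin.toFinset := by
      rw [Set.Finite.mem_toFinset]; exact ⟨a, rfl⟩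
    obtain ⟨i, hi⟩ := e0.surjective ⟨f a, hfa⟩
    refine ⟨i, hf ?_⟩
    rw [(hmem i).choose_spec, hi]
  · intro i j hij
    have : (f ∘ fun i => (hmem i).choose) i = (e0 i : Fin N) := (hmem i).choose_spec
    have h2 : (f ∘ fun i => (hmem i).choose) j = (e0 j : Fin N) := (hmem j).choose_spec
    simp only [Function.comp] at *
    rw [(hmem i).choose_spec, (hmem j).choose_spec]
    exact e0.strictMono hij

end prelim

section glue

variable {A B : Type*} {m : ℕ} (u : Fin m → A) (v : Fin m → B)

def glueRel : A ⊕ B → A ⊕ B → Prop := fun x y => ∃ i, x = Sum.inl (u i) ∧ y = Sum.inr (v i)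

open Classical in
noncomputable def glueW : A ⊕ B → A ⊕ B :=
  Sum.elim (fun a => Sum.inl a)
    (fun b => if h : ∃ i, v i = b then Sum.inl (u h.choose) else Sum.inr b)

variable {u v}

lemma glueW_eq_iff (hu : Function.Injective u) (hv : Function.Injective v) (x y : A ⊕ B) :
    Relation.EqvGen (glueRel u v) x y ↔ glueW u v x = glueW u v y := by
  constructor
  · intro h
    induction h with
    | rel x y hxy =>
      obtain ⟨i, rfl, rfl⟩ := hxy
      have hex : ∃ j, v j = v i := ⟨i, rfl⟩
      simp only [glueW, Sum.elim_inl, Sum.elim_inr, dif_pos hex]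
      rw [hv hex.choose_spec]
    | refl x => rfl
    | symm _ _ _ ih => exact ih.symm
    | trans _ _ _ _ _ ih1 ih2 => exact ih1.trans ih2
  · intro h
    match x, y with
    | Sum.inl a, Sum.inl a' =>
      simp only [glueW, Sum.elim_inl, Sum.inl.injEq] at h
      exact h ▸ Relation.EqvGen.refl _
    | Sum.inl a, Sum.inr b =>
      simp only [glueW, Sum.elim_inl, Sum.elim_inr] at h
      split_ifs at h with hex
      rw [Sum.inl.injEq] at h
      exact h ▸ Relation.EqvGen.rel _ _ ⟨hex.choose, rfl, by rw [hex.choose_spec]⟩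
    | Sum.inr b, Sum.inl a =>
      simp only [glueW, Sum.elim_inl, Sum.elim_inr] at h
      split_ifs at h with hex
      rw [Sum.inl.injEq] at h
      exact Relation.EqvGen.symm _ _
        (h ▸ Relation.EqvGen.rel _ _ ⟨hex.choose, rfl, by rw [hex.choose_spec]⟩)
    | Sum.inr b, Sum.inr b' =>
      simp only [glueW, Sum.elim_inr] at h
      split_ifs at h with h1 h2 h2
      · rw [Sum.inl.injEq] at h
        have h3 : h1.choose = h2.choose := hu h
        rw [← h1.choose_spec, ← h2.choose_spec, h3]
        exact Relation.EqvGen.refl _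
      · rw [Sum.inr.injEq] at h
        exact h ▸ Relation.EqvGen.refl _

lemma glue_inl_inl (hu : Function.Injective u) (hv : Function.Injective v) (a a' : A) :
    Quotient.mk (Relation.EqvGen.setoid (glueRel u v)) (Sum.inl a)
      = Quotient.mk _ (Sum.inl a') ↔ a = a' := by
  rw [mk_eq_iff]
  show Relation.EqvGen _ _ _ ↔ _
  rw [glueW_eq_iff hu hv]
  simp [glueW]

lemma glue_inr_inr (hu : Function.Injective u) (hv : Function.Injective v) (b b' : B) :
    Quotient.mk (Relation.EqvGen.setoid (glueRel u v)) (Sum.inr b)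
      = Quotient.mk _ (Sum.inr b') ↔ b = b' := by
  rw [mk_eq_iff]
  show Relation.EqvGen _ _ _ ↔ _
  rw [glueW_eq_iff hu hv]
  constructor
  · intro h
    by_cases h1 : ∃ i, v i = b <;> by_cases h2 : ∃ i, v i = b'
    · simp only [glueW, Sum.elim_inr, dif_pos h1, dif_pos h2, Sum.inl.injEq] at h
      rw [← h1.choose_spec, ← h2.choose_spec, hu h]
    · simp only [glueW, Sum.elim_inr, dif_pos h1, dif_neg h2] at h; simp at h
    · simp only [glueW, Sum.elim_inr, dif_pos h2, dif_neg h1] at h; simp at h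
    · simpa [glueW, dif_neg h1, dif_neg h2] using h
  · rintro rfl; rfl

lemma glue_inl_inr (hu : Function.Injective u) (hv : Function.Injective v) (a : A) (b : B) :
    Quotient.mk (Relation.EqvGen.setoid (glueRel u v)) (Sum.inl a)
      = Quotient.mk _ (Sum.inr b) ↔ ∃ i, a = u i ∧ b = v i := by
  rw [mk_eq_iff]
  show Relation.EqvGen _ _ _ ↔ _
  rw [glueW_eq_iff hu hv]
  constructor
  · intro h
    by_cases h1 : ∃ i, v i = b
    · simp only [glueW, Sum.elim_inl, Sum.elim_inr, dif_pos h1, Sum.inl.injEq] at h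
      exact ⟨h1.choose, h, h1.choose_spec.symm⟩
    · simp only [glueW, Sum.elim_inl, Sum.elim_inr, dif_neg h1] at h
      simp at h
  · rintro ⟨i, rfl, rfl⟩
    have hex : ∃ j, v j = v i := ⟨i, rfl⟩
    simp only [glueW, Sum.elim_inl, Sum.elim_inr, dif_pos hex, Sum.inl.injEq]
    rw [hv hex.choose_spec]

end glue

section comp

variable {k l m : ℕ} {C : Type*} (f : Fin k ⊕ Fin l → C) (g : Fin l ⊕ Fin m → C)

/-- Canonical function on the three rows. -/
def triF : Fin k ⊕ (Fin l ⊕ Fin m) → C :=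
  Sum.elim (fun a => f (Sum.inl a))
    (Sum.elim (fun b => f (Sum.inr b)) (fun c => g (Sum.inr c)))

variable {f g}

lemma bigS_ker (hfg : ∀ b, g (Sum.inl b) = f (Sum.inr b))
    (hmid : ∀ (a : Fin k) (c : Fin m), f (Sum.inl a) = g (Sum.inr c) →
      ∃ b : Fin l, f (Sum.inr b) = g (Sum.inr c)) :
    bigS (Setoid.ker f) (Setoid.ker g) = Setoid.ker (triF f g) := by
  have hFmap : ∀ a : Fin k ⊕ Fin l, triF f g (Sum.map id Sum.inl a) = f a := by
    rintro (a | b) <;> rfl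
  have hFr : ∀ a : Fin l ⊕ Fin m, triF f g (Sum.inr a) = g a := by
    rintro (b | c)
    · exact (hfg b).symm
    · rfl
  apply Setoid.ext
  intro x y
  constructor
  · intro h
    induction h with
    | rel x y hxy =>
      rcases hxy with ⟨a, b, hab, rfl, rfl⟩ | ⟨a, b, hab, rfl, rfl⟩
      · show triF f g _ = triF f g _
        rw [hFmap, hFmap]; exact hab
      · show triF f g _ = triF f g _
        rw [hFr, hFr]; exact hab
    | refl x => rfl
    | symm _ _ _ ih => exact ih.symm
    | trans _ _ _ _ _ ih1 ih2 => exact ih1.trans ih2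
  · intro h
    replace h : triF f g x = triF f g y := h
    have pstep : ∀ (a b : Fin k ⊕ Fin l), f a = f b →
        Relation.EqvGen (midRel (Setoid.ker f) (Setoid.ker g))
          (Sum.map id Sum.inl a) (Sum.map id Sum.inl b) :=
      fun a b hab => Relation.EqvGen.rel _ _ (Or.inl ⟨a, b, hab, rfl, rfl⟩)
    have qstep : ∀ (a b : Fin l ⊕ Fin m), g a = g b →
        Relation.EqvGen (midRel (Setoid.ker f) (Setoid.ker g))
          (Sum.inr a) (Sum.inr b) :=
      fun a b hab => Relation.EqvGen.rel _ _ (Or.inr ⟨a, b, hab, rfl, rfl⟩)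
    show Relation.EqvGen _ x y
    match x, y with
    | Sum.inl a, Sum.inl a' => exact pstep (Sum.inl a) (Sum.inl a') h
    | Sum.inl a, Sum.inr (Sum.inl b) => exact pstep (Sum.inl a) (Sum.inr b) h
    | Sum.inr (Sum.inl b), Sum.inl a => exact pstep (Sum.inr b) (Sum.inl a) h
    | Sum.inr (Sum.inl b), Sum.inr (Sum.inl b') => exact pstep (Sum.inr b) (Sum.inr b') h
    | Sum.inr (Sum.inl b), Sum.inr (Sum.inr c) =>
      exact qstep (Sum.inl b) (Sum.inr c) ((hfg b).trans h)
    | Sum.inr (Sum.inr c), Sum.inr (Sum.inl b) =>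
      exact qstep (Sum.inr c) (Sum.inl b) ((hfg b).trans h.symm).symm
    | Sum.inr (Sum.inr c), Sum.inr (Sum.inr c') => exact qstep (Sum.inr c) (Sum.inr c') h
    | Sum.inl a, Sum.inr (Sum.inr c) =>
      obtain ⟨b, hb⟩ := hmid a c h
      exact Relation.EqvGen.trans _ _ _
        (pstep (Sum.inl a) (Sum.inr b) (Eq.trans h hb.symm))
        (qstep (Sum.inl b) (Sum.inr c) ((hfg b).trans hb))
    | Sum.inr (Sum.inr c), Sum.inl a =>
      obtain ⟨b, hb⟩ := hmid a c h.symm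
      exact Relation.EqvGen.trans _ _ _
        (qstep (Sum.inr c) (Sum.inl b) ((hfg b).trans hb).symm)
        (pstep (Sum.inr b) (Sum.inl a) (hb.trans h))

lemma compP_ker (hfg : ∀ b, g (Sum.inl b) = f (Sum.inr b))
    (hmid : ∀ (a : Fin k) (c : Fin m), f (Sum.inl a) = g (Sum.inr c) →
      ∃ b : Fin l, f (Sum.inr b) = g (Sum.inr c)) :
    compP (Setoid.ker g) (Setoid.ker f)
      = Setoid.ker (Sum.elim (fun a => f (Sum.inl a)) (fun c => g (Sum.inr c))) := by
  unfold compP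
  rw [bigS_ker hfg hmid, comap_ker]
  apply Setoid.ext
  rintro (a | c) (a' | c') <;> exact Iff.rfl

lemma rlP_zero (hfg : ∀ b, g (Sum.inl b) = f (Sum.inr b))
    (hmid : ∀ (a : Fin k) (c : Fin m), f (Sum.inl a) = g (Sum.inr c) →
      ∃ b : Fin l, f (Sum.inr b) = g (Sum.inr c))
    (hmid2 : ∀ b : Fin l, (∃ a : Fin k, f (Sum.inl a) = f (Sum.inr b)) ∨
      (∃ c : Fin m, g (Sum.inr c) = f (Sum.inr b))) :
    rlP (Setoid.ker g) (Setoid.ker f) = 0 := by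
  have hker := bigS_ker hfg hmid
  rw [rlP]
  have : IsEmpty {c : Quotient (bigS (Setoid.ker f) (Setoid.ker g)) //
      ∀ x, Quotient.mk (bigS (Setoid.ker f) (Setoid.ker g)) x = c →
        ∃ b : Fin l, x = Sum.inr (Sum.inl b)} := by
    constructor
    rintro ⟨c, hc⟩
    obtain ⟨x, rfl⟩ := Quotient.exists_rep c
    obtain ⟨b, rfl⟩ := hc x rfl
    have step : ∀ y : Fin k ⊕ (Fin l ⊕ Fin m),
        triF f g y = triF f g (Sum.inr (Sum.inl b)) →
        ∃ b' : Fin l, y = Sum.inr (Sum.inl b') := by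
      intro y hy
      apply hc
      apply Quotient.sound
      rw [hker]
      exact hy
    rcases hmid2 b with ⟨a, ha⟩ | ⟨c, hcm⟩
    · obtain ⟨b', hb'⟩ := step (Sum.inl a) (by simpa [triF] using ha)
      exact absurd hb' (by simp)
    · obtain ⟨b', hb'⟩ := step (Sum.inr (Sum.inr c)) (by simpa [triF] using hcm)
      simp at hb'
  exact Nat.card_of_isEmpty

end comp

lemma card_pair_subtype {α : Type*} {P : α → Prop} {x y : α} (hxy : x ≠ y) (hx : P x) (hy : P y)
    (huniq : ∀ z, P z → z = x ∨ z = y) : Nat.card {z // P z} = 2 := by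
  rw [Nat.card_eq_two_iff]
  refine ⟨⟨x, hx⟩, ⟨y, hy⟩, fun h => hxy (congrArg Subtype.val h), ?_⟩
  rw [Set.eq_univ_iff_forall]
  rintro ⟨z, hz⟩
  rcases huniq z hz with rfl | rfl
  · exact Set.mem_insert _ _
  · exact Set.mem_insert_of_mem _ rfl

section constr

variable {k l : ℕ} (p : PP k l)

abbrev Tset : Type _ := {c : Quotient p // (∃ a : Fin k, Quotient.mk p (Sum.inl a) = c) ∧
    (∃ b : Fin l, Quotient.mk p (Sum.inr b) = c)}

lemma card_Tset : Nat.card (Tset p) = tP p := rfl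

noncomputable def muT (c : Tset p) : Fin k :=
  leastOf {a | Quotient.mk p (Sum.inl a) = c.val} c.prop.1

lemma muT_isLeast (c : Tset p) :
    IsLeast {a | Quotient.mk p (Sum.inl a) = c.val} (muT p c) := leastOf_isLeast _ _

lemma muT_inj : Function.Injective (muT p) := by
  intro c c' h
  apply Subtype.ext
  rw [← (muT_isLeast p c).1, ← (muT_isLeast p c').1, h]

noncomputable def mbT (c : Tset p) : Fin l :=
  leastOf {b | Quotient.mk p (Sum.inr b) = c.val} c.prop.2

lemma mbT_isLeast (c : Tset p) :
    IsLeast {b | Quotient.mk p (Sum.inr b) = c.val} (mbT p c) := leastOf_isLeast _ _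

lemma mbT_inj : Function.Injective (mbT p) := by
  intro c c' h
  apply Subtype.ext
  rw [← (mbT_isLeast p c).1, ← (mbT_isLeast p c').1, h]

noncomputable def eU : Fin (tP p) → Tset p :=
  (exists_strictMono_enum (muT p) (muT_inj p) (card_Tset p)).choose

lemma eU_bij : Function.Bijective (eU p) :=
  (exists_strictMono_enum (muT p) (muT_inj p) (card_Tset p)).choose_spec.1

lemma eU_mono : StrictMono (muT p ∘ eU p) :=
  (exists_strictMono_enum (muT p) (muT_inj p) (card_Tset p)).choose_spec.2

noncomputable def eL : Fin (tP p) → Tset p :=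
  (exists_strictMono_enum (mbT p) (mbT_inj p) (card_Tset p)).choose

lemma eL_bij : Function.Bijective (eL p) :=
  (exists_strictMono_enum (mbT p) (mbT_inj p) (card_Tset p)).choose_spec.1

lemma eL_mono : StrictMono (mbT p ∘ eL p) :=
  (exists_strictMono_enum (mbT p) (mbT_inj p) (card_Tset p)).choose_spec.2

lemma eU_val_inj : ∀ i i', (eU p i).val = (eU p i').val → i = i' :=
  fun _ _ h => (eU_bij p).1 (Subtype.ext h)

lemma eL_val_inj : ∀ i i', (eL p i).val = (eL p i').val → i = i' :=
  fun _ _ h => (eL_bij p).1 (Subtype.ext h)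

/-- The building partition `s`. -/
noncomputable def fS : Fin k ⊕ Fin (tP p) → Quotient p :=
  Sum.elim (fun a => Quotient.mk p (Sum.inl a)) (fun i => (eU p i).val)

noncomputable def sB : PP k (tP p) := Setoid.ker (fS p)

/-- The building partition `q`. -/
noncomputable def gQ : Fin l ⊕ Fin (tP p) → Quotient p :=
  Sum.elim (fun b => Quotient.mk p (Sum.inr b)) (fun i => (eL p i).val)

noncomputable def qB : PP l (tP p) := Setoid.ker (gQ p)

/-- The through partition `r`. -/
noncomputable def hR : Fin (tP p) ⊕ Fin (tP p) → Quotient p :=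
  Sum.elim (fun i => (eU p i).val) (fun j => (eL p j).val)

noncomputable def rT : PP (tP p) (tP p) := Setoid.ker (hR p)

lemma sB_building : isBuilding (sB p) := by
  refine ⟨fun i i' h => eU_val_inj p i i' h, fun i => ?_, fun i i' a a' hii' ha ha' => ?_⟩
  · obtain ⟨a, ha⟩ := (eU p i).prop.1
    exact ⟨a, ha⟩
  · have h1 : a = muT p (eU p i) := ha.unique (muT_isLeast p (eU p i))
    have h2 : a' = muT p (eU p i') := ha'.unique (muT_isLeast p (eU p i'))
    rw [h1, h2]
    exact eU_mono p hii'

lemma qB_building : isBuilding (qB p) := by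
  refine ⟨fun i i' h => eL_val_inj p i i' h, fun i => ?_, fun i i' a a' hii' ha ha' => ?_⟩
  · obtain ⟨b, hb⟩ := (eL p i).prop.2
    exact ⟨b, hb⟩
  · have h1 : a = mbT p (eL p i) := ha.unique (mbT_isLeast p (eL p i))
    have h2 : a' = mbT p (eL p i') := ha'.unique (mbT_isLeast p (eL p i'))
    rw [h1, h2]
    exact eL_mono p hii'

lemma rT_through : isThrough (rT p) := by
  refine ⟨?_, fun i i' h => eU_val_inj p i i' h, fun i i' h => eL_val_inj p i i' h⟩
  rintro (i | j)
  · obtain ⟨j, hj⟩ := (eL_bij p).2 (eU p i)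
    refine card_pair_subtype (x := Sum.inl i) (y := Sum.inr j) (by simp) rfl ?_ ?_
    · show hR p (Sum.inl i) = hR p (Sum.inr j)
      simp [hR, hj]
    · rintro (i' | j') hz
      · exact Or.inl (by rw [eU_val_inj p i i' hz])
      · refine Or.inr ?_
        have : (eL p j').val = (eL p j).val := by
          rw [hj]; exact hz.symm
        rw [eL_val_inj p j' j this]
  · obtain ⟨i, hi⟩ := (eU_bij p).2 (eL p j)
    refine card_pair_subtype (x := Sum.inr j) (y := Sum.inl i) (by simp) rfl ?_ ?_
    · show hR p (Sum.inr j) = hR p (Sum.inl i)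
      simp [hR, hi]
    · rintro (i' | j') hz
      · refine Or.inr ?_
        have : (eU p i').val = (eU p i).val := by
          rw [hi]; exact hz.symm
        rw [eU_val_inj p i' i this]
      · have hz' : (eL p j).val = (eL p j').val := hz
        exact Or.inl (by rw [eL_val_inj p j j' hz'])

noncomputable def f1 : Fin k ⊕ Fin (tP p) → Quotient p :=
  Sum.elim (fun a => Quotient.mk p (Sum.inl a)) (fun j => (eL p j).val)

lemma comp_rs : compP (rT p) (sB p) = Setoid.ker (f1 p) := by
  have h := compP_ker (f := fS p) (g := hR p) (fun b => rfl)
    (fun a c _ => by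
      obtain ⟨b, hb⟩ := (eU_bij p).2 (eL p c)
      exact ⟨b, by simp [fS, hR, hb]⟩)
  rw [sB, rT, h]
  apply Setoid.ext
  rintro (a | i) (a' | i') <;> exact Iff.rfl

lemma swap_qB : swapP (qB p) = Setoid.ker (gQ p ∘ Sum.swap) := by
  rw [qB, swapP, comap_ker]

noncomputable def fFull : Fin k ⊕ Fin l → Quotient p :=
  Sum.elim (fun a => Quotient.mk p (Sum.inl a)) (fun b => Quotient.mk p (Sum.inr b))

lemma p_as_ker : p = Setoid.ker (fFull p) := by
  apply Setoid.ext
  rintro (a | b) (a' | b') <;> exact ⟨Quotient.sound, Quotient.exact⟩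

lemma full_hmid : ∀ (a : Fin k) (c : Fin l), f1 p (Sum.inl a) = (gQ p ∘ Sum.swap) (Sum.inr c) →
    ∃ b : Fin (tP p), f1 p (Sum.inr b) = (gQ p ∘ Sum.swap) (Sum.inr c) := by
  intro a c h
  replace h : Quotient.mk p (Sum.inl a) = Quotient.mk p (Sum.inr c) := h
  have hc : (⟨Quotient.mk p (Sum.inr c), ⟨a, h⟩, ⟨c, rfl⟩⟩ : Tset p) ∈ Set.univ := trivial
  obtain ⟨j, hj⟩ := (eL_bij p).2 ⟨Quotient.mk p (Sum.inr c), ⟨a, h⟩, ⟨c, rfl⟩⟩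
  exact ⟨j, by simp [f1, gQ, hj]⟩

lemma comp_full : compP (swapP (qB p)) (compP (rT p) (sB p)) = p := by
  rw [comp_rs, swap_qB]
  have h := compP_ker (f := f1 p) (g := gQ p ∘ Sum.swap) (fun b => rfl) (full_hmid p)
  rw [h]
  exact (p_as_ker p).symm

lemma rl_rs : rlP (rT p) (sB p) = 0 := by
  rw [sB, rT]
  apply rlP_zero (fun b => rfl)
  · intro a c _
    obtain ⟨b, hb⟩ := (eU_bij p).2 (eL p c)
    exact ⟨b, by simp [fS, hR, hb]⟩
  · intro b
    obtain ⟨a, ha⟩ := (eU p b).prop.1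
    exact Or.inl ⟨a, ha⟩

lemma rl_full : rlP (swapP (qB p)) (compP (rT p) (sB p)) = 0 := by
  rw [comp_rs, swap_qB]
  apply rlP_zero (fun b => rfl) (full_hmid p)
  intro j
  obtain ⟨b, hb⟩ := (eL p j).prop.2
  exact Or.inr ⟨b, hb⟩

end constr

section count

variable {k l : ℕ} (p : PP k l)

lemma bP_sB : bP (sB p) = Set.ncard {c : Quotient p | ∃ a, Quotient.mk p (Sum.inl a) = c} := by
  have h1 : bP (sB p) = Nat.card (Set.range (fS p)) :=
    Nat.card_congr (Setoid.quotientKerEquivRange (fS p))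
  rw [h1, Nat.card_coe_set_eq]
  congr 1
  ext c
  constructor
  · rintro ⟨(a | i), rfl⟩
    · exact ⟨a, rfl⟩
    · obtain ⟨a, ha⟩ := (eU p i).prop.1
      exact ⟨a, ha⟩
  · rintro ⟨a, ha⟩
    exact ⟨Sum.inl a, ha⟩

lemma bP_qB : bP (qB p) = Set.ncard {c : Quotient p | ∃ b, Quotient.mk p (Sum.inr b) = c} := by
  have h1 : bP (qB p) = Nat.card (Set.range (gQ p)) :=
    Nat.card_congr (Setoid.quotientKerEquivRange (gQ p))
  rw [h1, Nat.card_coe_set_eq]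
  congr 1
  ext c
  constructor
  · rintro ⟨(b | i), rfl⟩
    · exact ⟨b, rfl⟩
    · obtain ⟨b, hb⟩ := (eL p i).prop.2
      exact ⟨b, hb⟩
  · rintro ⟨b, hb⟩
    exact ⟨Sum.inl b, hb⟩

lemma block_count : bP p + tP p = bP (qB p) + bP (sB p) := by
  classical
  set U : Set (Quotient p) := {c | ∃ a, Quotient.mk p (Sum.inl a) = c} with hUdef
  set L : Set (Quotient p) := {c | ∃ b, Quotient.mk p (Sum.inr b) = c} with hLdef
  have hUL : U ∪ L = Set.univ := by
    rw [Set.eq_univ_iff_forall]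
    intro c
    obtain ⟨x, rfl⟩ := Quotient.exists_rep c
    rcases x with a | b
    · exact Or.inl ⟨a, rfl⟩
    · exact Or.inr ⟨b, rfl⟩
  have hbp : bP p = (U ∪ L).ncard := by
    rw [hUL, Set.ncard_univ]; rfl
  have htp : tP p = (U ∩ L).ncard := by
    rw [← Nat.card_coe_set_eq]
    rfl
  have hkey := Set.ncard_union_add_ncard_inter U L
  rw [bP_sB, bP_qB, hbp, htp, ← hUdef, ← hLdef]
  omega

lemma tP_sB : tP (sB p) = tP p := by
  have hmk : ∀ x y, Quotient.mk (sB p) x = Quotient.mk (sB p) y ↔ fS p x = fS p y :=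
    fun x y => mk_eq_iff _ x y
  have hpf : ∀ i : Fin (tP p), (∃ a : Fin k, Quotient.mk (sB p) (Sum.inl a)
      = Quotient.mk (sB p) (Sum.inr i)) ∧
      (∃ b : Fin (tP p), Quotient.mk (sB p) (Sum.inr b) = Quotient.mk (sB p) (Sum.inr i)) := by
    intro i
    refine ⟨?_, ⟨i, rfl⟩⟩
    obtain ⟨a, ha⟩ := (eU p i).prop.1
    exact ⟨a, (hmk _ _).2 ha⟩
  let e : Fin (tP p) → {c : Quotient (sB p) //
      (∃ a : Fin k, Quotient.mk (sB p) (Sum.inl a) = c) ∧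
      (∃ b : Fin (tP p), Quotient.mk (sB p) (Sum.inr b) = c)} :=
    fun i => ⟨Quotient.mk (sB p) (Sum.inr i), hpf i⟩
  have hbij : Function.Bijective e := by
    constructor
    · intro i i' h
      have := (hmk _ _).1 (congrArg Subtype.val h)
      exact eU_val_inj p i i' this
    · rintro ⟨c, ⟨a, ha⟩, ⟨i, hi⟩⟩
      exact ⟨i, Subtype.ext hi⟩
  have := Nat.card_eq_of_bijective e hbij
  simp only [Nat.card_eq_fintype_card, Fintype.card_fin] at this
  rw [tP, ← this]

lemma tP_qB : tP (qB p) = tP p := by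
  have hmk : ∀ x y, Quotient.mk (qB p) x = Quotient.mk (qB p) y ↔ gQ p x = gQ p y :=
    fun x y => mk_eq_iff _ x y
  have hpf : ∀ i : Fin (tP p), (∃ a : Fin l, Quotient.mk (qB p) (Sum.inl a)
      = Quotient.mk (qB p) (Sum.inr i)) ∧
      (∃ b : Fin (tP p), Quotient.mk (qB p) (Sum.inr b) = Quotient.mk (qB p) (Sum.inr i)) := by
    intro i
    refine ⟨?_, ⟨i, rfl⟩⟩
    obtain ⟨b, hb⟩ := (eL p i).prop.2
    exact ⟨b, (hmk _ _).2 hb⟩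
  let e : Fin (tP p) → {c : Quotient (qB p) //
      (∃ a : Fin l, Quotient.mk (qB p) (Sum.inl a) = c) ∧
      (∃ b : Fin (tP p), Quotient.mk (qB p) (Sum.inr b) = c)} :=
    fun i => ⟨Quotient.mk (qB p) (Sum.inr i), hpf i⟩
  have hbij : Function.Bijective e := by
    constructor
    · intro i i' h
      have := (hmk _ _).1 (congrArg Subtype.val h)
      exact eL_val_inj p i i' this
    · rintro ⟨c, ⟨b, hb⟩, ⟨i, hi⟩⟩
      exact ⟨i, Subtype.ext hi⟩
  have := Nat.card_eq_of_bijective e hbij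
  simp only [Nat.card_eq_fintype_card, Fintype.card_fin] at this
  rw [tP, ← this]

lemma tP_le_bP {k l : ℕ} (r : PP k l) : tP r ≤ bP r :=
  Nat.card_le_card_of_injective Subtype.val Subtype.val_injective

lemma beta_count : betaP p = betaP (qB p) + betaP (sB p) := by
  have h1 := block_count p
  have h2 := tP_sB p
  have h3 := tP_qB p
  have h4 := tP_le_bP (sB p)
  have h5 := tP_le_bP (qB p)
  have h6 := tP_le_bP p
  unfold betaP
  omega

end count

section unique

lemma exists_other {α : Type*} {P : α → Prop} (h2 : Nat.card {z // P z} = 2) {x : α}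
    (hx : P x) : ∃ y, P y ∧ y ≠ x ∧ ∀ z, P z → z = x ∨ z = y := by
  rw [Nat.card_eq_two_iff] at h2
  obtain ⟨a, b, hab, huniv⟩ := h2
  have hmem : ∀ z : {z // P z}, z = a ∨ z = b := fun z => by
    have : z ∈ ({a, b} : Set _) := by rw [huniv]; trivial
    simpa using this
  rcases hmem ⟨x, hx⟩ with h | h
  · refine ⟨b.val, b.prop, ?_, ?_⟩
    · intro hbx
      exact hab (h.symm.trans (Subtype.ext hbx).symm)
    · intro z hz
      rcases hmem ⟨z, hz⟩ with h1 | h1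
      · exact Or.inl (congrArg Subtype.val (h1.trans h.symm))
      · exact Or.inr (congrArg Subtype.val h1)
  · refine ⟨a.val, a.prop, ?_, ?_⟩
    · intro hax
      exact hab ((Subtype.ext hax).trans h)
    · intro z hz
      rcases hmem ⟨z, hz⟩ with h1 | h1
      · exact Or.inr (congrArg Subtype.val h1)
      · exact Or.inl (congrArg Subtype.val (h1.trans h.symm))

lemma through_sigma {m : ℕ} {r' : PP m m} (hr' : isThrough r') :
    ∃ σ : Fin m → Fin m, Function.Bijective σ ∧
      (∀ i j, r'.r (Sum.inl i) (Sum.inr j) ↔ j = σ i) := by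
  have hσ : ∀ i : Fin m, ∃ ji : Fin m, r'.r (Sum.inl i) (Sum.inr ji) ∧
      (∀ j, r'.r (Sum.inl i) (Sum.inr j) → j = ji) := by
    intro i
    obtain ⟨y, hy, hyne, hyuniq⟩ := exists_other (hr'.1 (Sum.inl i)) (r'.iseqv.refl (Sum.inl i))
    rcases y with j | j
    · exact absurd (congrArg Sum.inl (hr'.2.1 i j hy).symm) hyne
    · refine ⟨j, hy, fun j' hj' => ?_⟩
      rcases hyuniq (Sum.inr j') hj' with h | h
      · exact absurd h (by simp)
      · simpa using h
  choose σ hσ1 hσ2 using hσ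
  have hinj : Function.Injective σ := by
    intro i i' h
    have h1 : r'.r (Sum.inl i) (Sum.inr (σ i)) := hσ1 i
    have h2 : r'.r (Sum.inl i') (Sum.inr (σ i)) := h ▸ hσ1 i'
    exact hr'.2.1 i i' (r'.iseqv.trans h1 (r'.iseqv.symm h2))
  refine ⟨σ, Finite.injective_iff_bijective.1 hinj, fun i j => ⟨fun h => hσ2 i j h,
    fun h => h ▸ hσ1 i⟩⟩

variable {k l m : ℕ} {p : PP k l} {q' : PP l m} {r' : PP m m} {s' : PP k m}

lemma uniq_main (hq' : isBuilding q') (hr' : isThrough r') (hs' : isBuilding s')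
    (hp : p = compP (swapP q') (compP r' s')) :
    m = tP p ∧ HEq q' (qB p) ∧ HEq r' (rT p) ∧ HEq s' (sB p) := by
  obtain ⟨σ, hσbij, hσiff⟩ := through_sigma hr'
  set τ : Fin m → Fin m := ⇑(Equiv.ofBijective σ hσbij).symm with hτdef
  have hστ : ∀ i, τ (σ i) = i := fun i => (Equiv.ofBijective σ hσbij).symm_apply_apply i
  have hτσ : ∀ j, σ (τ j) = j := fun j => (Equiv.ofBijective σ hσbij).apply_symm_apply j
  have hτinj : Function.Injective τ := (Equiv.ofBijective σ hσbij).symm.injective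
  -- the composite r' s' as a kernel
  set g0 : Fin m ⊕ Fin m → Quotient s' :=
    Sum.elim (fun i => Quotient.mk s' (Sum.inr i)) (fun j => Quotient.mk s' (Sum.inr (τ j)))
    with hg0def
  have hlow_iff : ∀ i i' : Fin m, s'.r (Sum.inr i) (Sum.inr i') ↔ i = i' :=
    fun i i' => ⟨fun h => hs'.1 i i' h, fun h => h ▸ s'.iseqv.refl _⟩
  have hr'g0 : r' = Setoid.ker g0 := by
    apply Setoid.ext
    have hmm : ∀ i i' : Fin m,
        Quotient.mk s' (Sum.inr i) = Quotient.mk s' (Sum.inr i') ↔ i = i' := fun i i' =>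
      ⟨fun h => (hlow_iff i i').1 (Quotient.exact h), fun h => h ▸ rfl⟩
    have hiff : ∀ i j, i = τ j ↔ j = σ i := fun i j =>
      ⟨fun h => by rw [h, hτσ], fun h => by rw [h, hστ]⟩
    rintro (i | j) (i' | j')
    · show r'.r _ _ ↔ Quotient.mk s' (Sum.inr i) = Quotient.mk s' (Sum.inr i')
      rw [hmm]
      exact ⟨fun h => hr'.2.1 i i' h, fun h => h ▸ r'.iseqv.refl _⟩
    · show r'.r _ _ ↔ Quotient.mk s' (Sum.inr i) = Quotient.mk s' (Sum.inr (τ j'))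
      rw [hmm, hiff]
      exact hσiff i j'
    · show r'.r _ _ ↔ Quotient.mk s' (Sum.inr (τ j)) = Quotient.mk s' (Sum.inr i')
      rw [hmm]
      constructor
      · intro h
        exact ((hiff i' j).2 ((hσiff i' j).1 (r'.iseqv.symm h))).symm
      · intro h
        exact r'.iseqv.symm ((hσiff i' j).2 ((hiff i' j).1 h.symm))
    · show r'.r _ _ ↔ Quotient.mk s' (Sum.inr (τ j)) = Quotient.mk s' (Sum.inr (τ j'))
      rw [hmm]
      constructor
      · intro h
        exact congrArg τ (hr'.2.2 j j' h)
      · intro h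
        exact (hτinj h) ▸ r'.iseqv.refl _
  set f1' : Fin k ⊕ Fin m → Quotient s' :=
    Sum.elim (fun a => Quotient.mk s' (Sum.inl a)) (fun c => Quotient.mk s' (Sum.inr (τ c)))
    with hf1'def
  have hcomp1 : compP r' s' = Setoid.ker f1' := by
    have h2 : compP (Setoid.ker g0) (Setoid.ker (Quotient.mk s')) = Setoid.ker f1' :=
      compP_ker (fun b => rfl) (fun a c _ => ⟨τ c, rfl⟩)
    rw [← hr'g0, ← setoid_as_ker s'] at h2
    exact h2
  -- glue the two quotients
  set u : Fin m → Quotient s' := fun i => Quotient.mk s' (Sum.inr (τ i)) with hudef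
  set v : Fin m → Quotient q' := fun i => Quotient.mk q' (Sum.inr i) with hvdef
  have hu : Function.Injective u := fun i i' h =>
    hτinj (hs'.1 _ _ (Quotient.exact h))
  have hv : Function.Injective v := fun i i' h => hq'.1 i i' (Quotient.exact h)
  set D := Quotient (Relation.EqvGen.setoid (glueRel u v)) with hDdef
  set dI : Quotient s' → D := fun c => Quotient.mk _ (Sum.inl c) with hdIdef
  set dJ : Quotient q' → D := fun c => Quotient.mk _ (Sum.inr c) with hdJdef
  have hdI_inj : Function.Injective dI := fun c c' h => (glue_inl_inl hu hv c c').1 h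
  have hdJ_inj : Function.Injective dJ := fun c c' h => (glue_inr_inr hu hv c c').1 h
  have hglue : ∀ c c', dI c = dJ c' ↔ ∃ i, c = u i ∧ c' = v i :=
    fun c c' => glue_inl_inr hu hv c c'
  -- the composite as a kernel valued in D
  set gD : Fin m ⊕ Fin l → D :=
    Sum.elim (fun i => dJ (Quotient.mk q' (Sum.inr i))) (fun b => dJ (Quotient.mk q' (Sum.inl b)))
    with hgDdef
  have hswapD : swapP q' = Setoid.ker gD := by
    have h1 : swapP q' = Setoid.ker (Quotient.mk q' ∘ Sum.swap) :=
      (congrArg (Setoid.comap Sum.swap) (setoid_as_ker q')).trans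
        (comap_ker Sum.swap (Quotient.mk q'))
    rw [h1]
    apply Setoid.ext
    rintro (i | b) (i' | b') <;>
      exact ⟨fun h => congrArg dJ h, fun h => hdJ_inj h⟩
  have hupD : compP r' s' = Setoid.ker (fun x => dI (f1' x)) := by
    rw [hcomp1]
    exact ker_comp_inj (f1') dI hdI_inj
  set G2 : Fin k ⊕ Fin l → D :=
    Sum.elim (fun a => dI (Quotient.mk s' (Sum.inl a))) (fun b => dJ (Quotient.mk q' (Sum.inl b)))
    with hG2def
  have hp2 : p = Setoid.ker G2 := by
    rw [hp, hswapD, hupD]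
    have h := compP_ker (f := fun x => dI (f1' x)) (g := gD)
      (fun b => (Quotient.sound (Relation.EqvGen.rel _ _ ⟨b, rfl, rfl⟩)).symm)
      (fun a c h => by
        obtain ⟨i, h1, h2⟩ := (hglue _ _).1 h
        exact ⟨i, by
          show dI (f1' (Sum.inr i)) = gD (Sum.inr c)
          rw [show f1' (Sum.inr i) = u i from rfl, ← h1]
          exact h⟩)
    rw [h]
    apply Setoid.ext
    rintro (a | b) (a' | b') <;> exact Iff.rfl
  have hmkp : ∀ x y, p.r x y ↔ G2 x = G2 y := fun x y => by
    rw [hp2]; exact Iff.rfl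
  -- characterizations of p
  have hαα : ∀ a a', p.r (Sum.inl a) (Sum.inl a') ↔ s'.r (Sum.inl a) (Sum.inl a') := by
    intro a a'
    rw [hmkp]
    exact ⟨fun h => Quotient.exact (hdI_inj h), fun h => congrArg dI (Quotient.sound h)⟩
  have hββ : ∀ b b', p.r (Sum.inr b) (Sum.inr b') ↔ q'.r (Sum.inl b) (Sum.inl b') := by
    intro b b'
    rw [hmkp]
    exact ⟨fun h => Quotient.exact (hdJ_inj h), fun h => congrArg dJ (Quotient.sound h)⟩
  have hαβ : ∀ a b, p.r (Sum.inl a) (Sum.inr b) ↔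
      ∃ i, s'.r (Sum.inl a) (Sum.inr (τ i)) ∧ q'.r (Sum.inl b) (Sum.inr i) := by
    intro a b
    rw [hmkp]
    show dI _ = dJ _ ↔ _
    rw [hglue]
    constructor
    · rintro ⟨i, h1, h2⟩
      exact ⟨i, Quotient.exact h1, Quotient.exact h2⟩
    · rintro ⟨i, h1, h2⟩
      exact ⟨i, Quotient.sound h1, Quotient.sound h2⟩
  obtain ⟨aU, haU⟩ := Classical.axiomOfChoice hs'.2.1
  obtain ⟨bL, hbL⟩ := Classical.axiomOfChoice hq'.2.1
  set χ : Fin m → Quotient p := fun i => Quotient.mk p (Sum.inl (aU i)) with hχdef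
  set χ' : Fin m → Quotient p := fun j => Quotient.mk p (Sum.inr (bL j)) with hχ'def
  have hδ : ∀ a i, s'.r (Sum.inl a) (Sum.inr i) ↔ Quotient.mk p (Sum.inl a) = χ i := by
    intro a i
    constructor
    · intro h
      exact Quotient.sound ((hαα a (aU i)).2 (s'.iseqv.trans h (s'.iseqv.symm (haU i))))
    · intro h
      exact s'.iseqv.trans ((hαα a (aU i)).1 (Quotient.exact h)) (haU i)
  have hε : ∀ b j, q'.r (Sum.inl b) (Sum.inr j) ↔ Quotient.mk p (Sum.inr b) = χ' j := by
    intro b j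
    constructor
    · intro h
      exact Quotient.sound ((hββ b (bL j)).2 (q'.iseqv.trans h (q'.iseqv.symm (hbL j))))
    · intro h
      exact q'.iseqv.trans ((hββ b (bL j)).1 (Quotient.exact h)) (hbL j)
  have hχτ : ∀ j, χ (τ j) = χ' j := fun j =>
    Quotient.sound ((hαβ (aU (τ j)) (bL j)).2 ⟨j, haU (τ j), hbL j⟩)
  have hχ'σ : ∀ i, χ i = χ' (σ i) := fun i => by
    have := hχτ (σ i); rwa [hστ i] at this
  set χT : Fin m → Tset p := fun i => ⟨χ i, ⟨aU i, rfl⟩, ⟨bL (σ i), (hχ'σ i).symm⟩⟩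
    with hχTdef
  have hχT_inj : Function.Injective χT := by
    intro i i' h
    have h1 : χ i = χ i' := congrArg Subtype.val h
    have h2 : s'.r (Sum.inl (aU i)) (Sum.inr i') := (hδ (aU i) i').2 h1
    exact ((hlow_iff i i').1 (s'.iseqv.trans (s'.iseqv.symm (haU i)) h2))
  have hχT_surj : Function.Surjective χT := by
    rintro ⟨c, ⟨a, ha⟩, ⟨b, hb⟩⟩
    have hpr : p.r (Sum.inl a) (Sum.inr b) := Quotient.exact (ha.trans hb.symm)
    obtain ⟨i, h1, h2⟩ := (hαβ a b).1 hpr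
    refine ⟨τ i, Subtype.ext ?_⟩
    show χ (τ i) = c
    rw [← ((hδ a (τ i)).1 h1), ha]
  have hm : m = tP p := by
    have h := Nat.card_eq_of_bijective χT ⟨hχT_inj, hχT_surj⟩
    rw [← card_Tset p, ← h]
    simp
  subst hm
  -- identify χT with eU
  have hsetχ : ∀ i, {x : Fin k | s'.r (Sum.inl x) (Sum.inr i)}
      = {x | Quotient.mk p (Sum.inl x) = (χT i).val} := fun i => Set.ext (fun x => hδ x i)
  have hχT_mono : StrictMono (muT p ∘ χT) := by
    intro i i' hii'
    have h1 : IsLeast {x : Fin k | s'.r (Sum.inl x) (Sum.inr i)} (muT p (χT i)) := by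
      rw [hsetχ]; exact muT_isLeast p (χT i)
    have h2 : IsLeast {x : Fin k | s'.r (Sum.inl x) (Sum.inr i')} (muT p (χT i')) := by
      rw [hsetχ]; exact muT_isLeast p (χT i')
    exact hs'.2.2 i i' _ _ hii' h1 h2
  have hrangeχ : Set.range (muT p ∘ χT) = Set.range (muT p ∘ eU p) := by
    rw [Set.range_comp, Set.range_comp, Function.Surjective.range_eq hχT_surj,
      Function.Surjective.range_eq (eU_bij p).2]
  haveI : WellFoundedLT (Fin (tP p)) := inferInstance
  have hfeq := (StrictMono.range_inj hχT_mono (eU_mono p)).1 hrangeχ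
  have hχeU : ∀ i, χT i = eU p i := fun i => muT_inj p (congrFun hfeq i)
  have hχval : ∀ i, χ i = (eU p i).val := fun i => congrArg Subtype.val (hχeU i)
  -- identify χ'T with eL
  set χ'T : Fin (tP p) → Tset p := fun j => ⟨χ' j, ⟨aU (τ j), hχτ j ▸ rfl⟩, ⟨bL j, rfl⟩⟩
    with hχ'Tdef
  have hlow_iff' : ∀ i i' : Fin (tP p), q'.r (Sum.inr i) (Sum.inr i') ↔ i = i' :=
    fun i i' => ⟨fun h => hq'.1 i i' h, fun h => h ▸ q'.iseqv.refl _⟩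
  have hχ'T_inj : Function.Injective χ'T := by
    intro j j' h
    have h1 : χ' j = χ' j' := congrArg Subtype.val h
    have h2 : q'.r (Sum.inl (bL j)) (Sum.inr j') := (hε (bL j) j').2 h1
    exact (hlow_iff' j j').1 (q'.iseqv.trans (q'.iseqv.symm (hbL j)) h2)
  have hχ'T_surj : Function.Surjective χ'T := by
    rintro ⟨c, ⟨a, ha⟩, ⟨b, hb⟩⟩
    have hpr : p.r (Sum.inl a) (Sum.inr b) := Quotient.exact (ha.trans hb.symm)
    obtain ⟨i, h1, h2⟩ := (hαβ a b).1 hpr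
    refine ⟨i, Subtype.ext ?_⟩
    show χ' i = c
    rw [← ((hε b i).1 h2), hb]
  have hsetχ' : ∀ j, {x : Fin l | q'.r (Sum.inl x) (Sum.inr j)}
      = {x | Quotient.mk p (Sum.inr x) = (χ'T j).val} := fun j => Set.ext (fun x => hε x j)
  have hχ'T_mono : StrictMono (mbT p ∘ χ'T) := by
    intro j j' hjj'
    have h1 : IsLeast {x : Fin l | q'.r (Sum.inl x) (Sum.inr j)} (mbT p (χ'T j)) := by
      rw [hsetχ']; exact mbT_isLeast p (χ'T j)
    have h2 : IsLeast {x : Fin l | q'.r (Sum.inl x) (Sum.inr j')} (mbT p (χ'T j')) := by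
      rw [hsetχ']; exact mbT_isLeast p (χ'T j')
    exact hq'.2.2 j j' _ _ hjj' h1 h2
  have hrangeχ' : Set.range (mbT p ∘ χ'T) = Set.range (mbT p ∘ eL p) := by
    rw [Set.range_comp, Set.range_comp, Function.Surjective.range_eq hχ'T_surj,
      Function.Surjective.range_eq (eL_bij p).2]
  have hfeq' := (StrictMono.range_inj hχ'T_mono (eL_mono p)).1 hrangeχ'
  have hχ'eL : ∀ j, χ'T j = eL p j := fun j => mbT_inj p (congrFun hfeq' j)
  have hχ'val : ∀ j, χ' j = (eL p j).val := fun j => congrArg Subtype.val (hχ'eL j)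
  -- s' = sB p
  have hs'eq : s' = sB p := by
    apply Setoid.ext
    rintro (a | i) (a' | i')
    · show _ ↔ Quotient.mk p (Sum.inl a) = Quotient.mk p (Sum.inl a')
      exact ⟨fun h => Quotient.sound ((hαα a a').2 h), fun h => (hαα a a').1 (Quotient.exact h)⟩
    · show _ ↔ Quotient.mk p (Sum.inl a) = (eU p i').val
      rw [← hχval i']
      exact hδ a i'
    · show _ ↔ (eU p i).val = Quotient.mk p (Sum.inl a')
      constructor
      · intro h
        have h2 := (hδ a' i).1 (s'.iseqv.symm h)
        rw [hχval i] at h2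
        exact h2.symm
      · intro h
        exact s'.iseqv.symm ((hδ a' i).2 (by rw [hχval i]; exact h.symm))
    · show _ ↔ (eU p i).val = (eU p i').val
      constructor
      · intro h
        rw [(hlow_iff i i').1 h]
      · intro h
        exact (hlow_iff i i').2 (eU_val_inj p i i' h)
  -- q' = qB p
  have hq'eq : q' = qB p := by
    apply Setoid.ext
    rintro (b | j) (b' | j')
    · show _ ↔ Quotient.mk p (Sum.inr b) = Quotient.mk p (Sum.inr b')
      exact ⟨fun h => Quotient.sound ((hββ b b').2 h), fun h => (hββ b b').1 (Quotient.exact h)⟩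
    · show _ ↔ Quotient.mk p (Sum.inr b) = (eL p j').val
      rw [← hχ'val j']
      exact hε b j'
    · show _ ↔ (eL p j).val = Quotient.mk p (Sum.inr b')
      constructor
      · intro h
        have h2 := (hε b' j).1 (q'.iseqv.symm h)
        rw [hχ'val j] at h2
        exact h2.symm
      · intro h
        exact q'.iseqv.symm ((hε b' j).2 (by rw [hχ'val j]; exact h.symm))
    · show _ ↔ (eL p j).val = (eL p j').val
      constructor
      · intro h
        rw [(hlow_iff' j j').1 h]
      · intro h
        exact (hlow_iff' j j').2 (eL_val_inj p j j' h)
  -- r' = rT p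
  have hkey : ∀ j, (eL p j).val = (eU p (τ j)).val := by
    intro j
    rw [← hχ'val j, ← hχτ j, hχval (τ j)]
  have hiστ : ∀ i j, i = τ j ↔ j = σ i := fun i j =>
    ⟨fun h => by rw [h, hτσ], fun h => by rw [h, hστ]⟩
  have hr'eq : r' = rT p := by
    apply Setoid.ext
    rintro (i | j) (i' | j')
    · show _ ↔ (eU p i).val = (eU p i').val
      constructor
      · intro h
        rw [hr'.2.1 i i' h]
      · intro h
        exact (eU_val_inj p i i' h) ▸ r'.iseqv.refl _
    · show _ ↔ (eU p i).val = (eL p j').val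
      rw [hσiff i j', hkey j']
      constructor
      · intro h
        rw [← (hiστ i j').2 h]
      · intro h
        exact (hiστ i j').1 (eU_val_inj p i (τ j') h)
    · show _ ↔ (eL p j).val = (eU p i').val
      rw [hkey j]
      constructor
      · intro h
        have h2 := (hσiff i' j).1 (r'.iseqv.symm h)
        rw [(hiστ i' j).2 h2]
      · intro h
        exact r'.iseqv.symm ((hσiff i' j).2 ((hiστ i' j).1 (eU_val_inj p (τ j) i' h).symm))
    · show _ ↔ (eL p j).val = (eL p j').val
      constructor
      · intro h
        rw [hr'.2.2 j j' h]
      · intro h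
        exact (eL_val_inj p j j' h) ▸ r'.iseqv.refl _
  exact ⟨rfl, heq_of_eq hq'eq, heq_of_eq hr'eq, heq_of_eq hs'eq⟩

end unique

/-- existence and uniqueness of the through-block decomposition
`p = q* r s`, together with the loop and block counting formulae. -/
theorem through_block_decomposition {k l : ℕ} (p : PP k l) :
    ∃ (q : PP l (tP p)) (r : PP (tP p) (tP p)) (s : PP k (tP p)),
      isBuilding q ∧ isThrough r ∧ isBuilding s ∧
      p = compP (swapP q) (compP r s) ∧
      rlP r s = 0 ∧ rlP (swapP q) (compP r s) = 0 ∧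
      bP p + tP p = bP q + bP s ∧
      betaP p = betaP q + betaP s ∧
      (∀ (m : ℕ) (q' : PP l m) (r' : PP m m) (s' : PP k m),
        isBuilding q' → isThrough r' → isBuilding s' →
        p = compP (swapP q') (compP r' s') →
        m = tP p ∧ HEq q' q ∧ HEq r' r ∧ HEq s' s) := by
  refine ⟨qB p, rT p, sB p, qB_building p, rT_through p, sB_building p,
    (comp_full p).symm, rl_rs p, rl_full p, block_count p, beta_count p, ?_⟩
  intro m q' r' s' hq' hr' hs' hpe
  exact uniq_main hq' hr' hs' hpe
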